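/- Fix m ≥ 1. If F is a central maximal intersecting subfamily of P([m]), a ∈ [m], and B ⊆ [m]\{a} satisfies B ∈ F* and B ∪ {a} ∉ F*, then ⌊(m−1)/2⌋ ≤ |B| ≤ ⌈(m−1)/2⌉. -/

import Mathlib

open Finset

variable {m : ℕ}

/-- A family of finsets is intersecting if any two members meet. -/
def IsIntersecting (F : Finset (Finset (Fin m))) : Prop :=
  ∀ A ∈ F, ∀ B ∈ F, (A ∩ B).Nonempty

/-- A maximal intersecting subfamily of the power set of `Fin m`. -/
def IsMaxIntersecting (F : Finset (Finset (Fin m))) : Prop :=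
  IsIntersecting F ∧ ∀ G : Finset (Finset (Fin m)), IsIntersecting G → F ⊆ G → G ⊆ F

/-- A family is subset-closed if it contains all subsets of its members. -/
def IsSubsetClosed (F : Finset (Finset (Fin m))) : Prop :=
  ∀ A ∈ F, ∀ B ⊆ A, B ∈ F

/-- The embedding of a family into `ℝ^{P([m])}`. -/
def famVec (F : Finset (Finset (Fin m))) : Finset (Fin m) → ℝ := fun A =>
  if A ∈ F ∧ Aᶜ ∉ F then 1 else if A ∉ F ∧ Aᶜ ∈ F then -1 else 0

/-- The standard basis vector `e_A` of `ℝ^{P([m])}`. -/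
def stdBasis (A : Finset (Fin m)) : Finset (Fin m) → ℝ := fun B => if B = A then 1 else 0

/-- The star of a family centered at `a`. -/
def starFam (a : Fin m) (F : Finset (Finset (Fin m))) : Finset (Finset (Fin m)) :=
  F.filter fun A => a ∈ A

/-- The setwise complement (dual) `F* = {Aᶜ : A ∈ F}`. -/
def dualFam (F : Finset (Finset (Fin m))) : Finset (Finset (Fin m)) :=
  F.image fun A => Aᶜ

lemma aux_univ_mem (hm : 1 ≤ m) {F : Finset (Finset (Fin m))} (hF : IsMaxIntersecting F) :
    (univ : Finset (Fin m)) ∈ F := by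
  have hinh : Nonempty (Fin m) := ⟨⟨0, hm⟩⟩
  have hne : ∀ C ∈ F, C.Nonempty := fun C hC => by
    have := hF.1 C hC C hC; simpa using this
  apply hF.2 (insert univ F) ?_ (subset_insert _ _) (mem_insert_self _ _)
  intro A hA B hB
  simp only [mem_insert] at hA hB
  rcases hA with rfl | hA <;> rcases hB with rfl | hB
  · simpa using Finset.univ_nonempty
  · simpa using hne B hB
  · simpa [Finset.inter_comm] using hne A hA
  · exact hF.1 A hA B hB

lemma aux_mem_of_compl_not_mem (hm : 1 ≤ m) {F : Finset (Finset (Fin m))}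
    (hF : IsMaxIntersecting F) {A : Finset (Fin m)} (h : Aᶜ ∉ F) : A ∈ F := by
  have hne : ∀ C ∈ F, C.Nonempty := fun C hC => by
    have := hF.1 C hC C hC; simpa using this
  by_cases hall : ∀ C ∈ F, (A ∩ C).Nonempty
  · have hAne : A.Nonempty := by
      by_contra hAe
      rw [Finset.not_nonempty_iff_eq_empty] at hAe
      have := hall univ (aux_univ_mem hm hF)
      simp [hAe] at this
    apply hF.2 (insert A F) ?_ (subset_insert _ _) (mem_insert_self _ _)
    intro X hX Y hY
    simp only [mem_insert] at hX hY
    rcases hX with rfl | hX <;> rcases hY with rfl | hY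
    · simpa using hAne
    · exact hall Y hY
    · rw [Finset.inter_comm]; exact hall X hX
    · exact hF.1 X hX Y hY
  · push_neg at hall
    obtain ⟨C, hC, hAC⟩ := hall
    have hCsub : C ⊆ Aᶜ := by
      intro x hx
      simp only [Finset.mem_compl]
      intro hxA
      have : x ∈ A ∩ C := Finset.mem_inter.mpr ⟨hxA, hx⟩
      simp [hAC] at this
    exfalso; apply h
    apply hF.2 (insert Aᶜ F) ?_ (subset_insert _ _) (mem_insert_self _ _)
    intro X hX Y hY
    simp only [mem_insert] at hX hY
    rcases hX with rfl | hX <;> rcases hY with rfl | hY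
    · obtain ⟨x, hx⟩ := hne C hC
      exact ⟨x, Finset.mem_inter.mpr ⟨hCsub hx, hCsub hx⟩⟩
    · obtain ⟨x, hx⟩ := hF.1 C hC Y hY
      rw [Finset.mem_inter] at hx
      exact ⟨x, Finset.mem_inter.mpr ⟨hCsub hx.1, hx.2⟩⟩
    · obtain ⟨x, hx⟩ := hF.1 X hX C hC
      rw [Finset.mem_inter] at hx
      exact ⟨x, Finset.mem_inter.mpr ⟨hx.1, hCsub hx.2⟩⟩
    · exact hF.1 X hX Y hY

/-- For a central maximal intersecting family `F`, any `B ⊆ [m] \ {a}` with `B ∈ F*` and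
`B ∪ {a} ∉ F*` satisfies `⌊(m-1)/2⌋ ≤ |B| ≤ ⌈(m-1)/2⌉`. -/
theorem central_fiber_size (m : ℕ) (hm : 1 ≤ m) (F : Finset (Finset (Fin m)))
    (hF : IsMaxIntersecting F) (hcentral : ∀ A ∈ F, m ≤ 2 * A.card)
    (a : Fin m) (B : Finset (Fin m)) (haB : a ∉ B)
    (hB : B ∈ dualFam F) (hBa : insert a B ∉ dualFam F) :
    (m - 1) / 2 ≤ B.card ∧ B.card ≤ m / 2 := by
  -- B ∈ dualFam F means Bᶜ ∈ F
  have hBc : Bᶜ ∈ F := by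
    simp only [dualFam, Finset.mem_image] at hB
    obtain ⟨C, hC, hCe⟩ := hB
    rwa [← hCe, compl_compl]
  -- insert a B ∉ dualFam F means (insert a B)ᶜ ∉ F, hence insert a B ∈ F
  have hins : insert a B ∈ F := by
    apply aux_mem_of_compl_not_mem hm hF
    intro h
    apply hBa
    have := Finset.mem_image_of_mem (fun A => Aᶜ) h
    simp only [compl_compl] at this
    exact this
  have h1 := hcentral _ hBc
  have h2 := hcentral _ hins
  rw [Finset.card_compl] at h1
  rw [Finset.card_insert_of_notMem haB] at h2
  have hle : B.card ≤ m := by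
    simpa using Finset.card_le_card (Finset.subset_univ B)
  simp only [Fintype.card_fin] at h1
  omega
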